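/- Let n ≥ 1, let R = ℤ[x]/(xⁿ − 1), let Q₀ be a positive integer, γ ≥ 1, and β > 0, and let h ∈ R. Suppose z₀*, z₁*, e*, z₁, z₀′ ∈ R satisfy: z₀* + h·z₁* + e* ≡ u (mod Q₀), z₀′ ≡ u − h·z₁ (mod Q₀), ‖(v(z₀* + e*), γ·v(z₁*))‖ ≤ β, ‖(v(z₀′), γ·v(z₁))‖ ≤ β, and z₁ ≠ z₁*. Then the pair (x₀, x₁) = (z₀* + e* − z₀′, z₁* − z₁) is nonzero, satisfies x₀ + h·x₁ ≡ 0 (mod Q₀), and ‖(v(x₀), γ·v(x₁))‖ ≤ 2β. (A signature forgery colliding with a simulated transcript on the same hash target yields a solution to the NTRU-SIS problem in the twisted norm with bound 2β; this is the core of the strong EU-CMA security reduction for the Robin signature scheme.) -/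

import Mathlib

/-- The ring `R = ℤ[x]/(xⁿ - 1)`, realized as the group algebra `ℤ[ℤ/nℤ]`;
the coefficient vector of `a : Rpoly n` is `fun i => a i`. -/
abbrev Rpoly (n : ℕ) : Type := AddMonoidAlgebra ℤ (ZMod n)

/-- The twisted norm `‖(v(a), γ·v(b))‖` of a pair of elements of `R`. -/
noncomputable def twistedNorm (n : ℕ) [NeZero n] (γ : ℝ) (a b : Rpoly n) : ℝ :=
  Real.sqrt ((∑ i : ZMod n, ((a.coeff i : ℝ)) ^ 2) + ∑ i : ZMod n, (γ * ((b.coeff i : ℝ))) ^ 2)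

/-- Coefficientwise congruence `a ≡ b (mod Q₀)` in `R`. -/
def congMod (n : ℕ) [NeZero n] (Q₀ : ℤ) (a b : Rpoly n) : Prop :=
  ∀ i : ZMod n, Q₀ ∣ (a - b).coeff i

noncomputable def twVec (n : ℕ) [NeZero n] (γ : ℝ) (a b : Rpoly n) :
    EuclideanSpace ℝ (ZMod n ⊕ ZMod n) :=
  WithLp.toLp 2 (Sum.elim (fun i => (a.coeff i : ℝ)) (fun i => γ * (b.coeff i : ℝ)))

lemma twistedNorm_eq (n : ℕ) [NeZero n] (γ : ℝ) (a b : Rpoly n) :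
    twistedNorm n γ a b = ‖twVec n γ a b‖ := by
  rw [EuclideanSpace.norm_eq, twistedNorm]
  congr 1
  rw [Fintype.sum_sum_type]
  simp [twVec, mul_pow, sq_abs]

lemma rpoly_sub_apply (n : ℕ) [NeZero n] (a a' : Rpoly n) (i : ZMod n) :
    (a - a').coeff i = a.coeff i - a'.coeff i := rfl

lemma twVec_sub (n : ℕ) [NeZero n] (γ : ℝ) (a b a' b' : Rpoly n) :
    twVec n γ (a - a') (b - b') = twVec n γ a b - twVec n γ a' b' := by
  ext j
  cases j <;> simp only [twVec, PiLp.toLp_apply, Sum.elim_inl, Sum.elim_inr, PiLp.sub_apply, rpoly_sub_apply] <;> push_cast <;> ring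

theorem stmt_10 (n : ℕ) [NeZero n] (hn : 1 ≤ n) (Q₀ : ℤ) (hQ₀ : 0 < Q₀)
    (γ β : ℝ) (hγ : 1 ≤ γ) (hβ : 0 < β)
    (h u z₀s z₁s es z₁ z₀' : Rpoly n)
    (h1 : congMod n Q₀ (z₀s + h * z₁s + es) u)
    (h2 : congMod n Q₀ z₀' (u - h * z₁))
    (h3 : twistedNorm n γ (z₀s + es) z₁s ≤ β)
    (h4 : twistedNorm n γ z₀' z₁ ≤ β)
    (h5 : z₁ ≠ z₁s) :
    ¬(z₀s + es - z₀' = 0 ∧ z₁s - z₁ = 0)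
    ∧ congMod n Q₀ ((z₀s + es - z₀') + h * (z₁s - z₁)) 0
    ∧ twistedNorm n γ (z₀s + es - z₀') (z₁s - z₁) ≤ 2 * β := by
  refine ⟨?_, ?_, ?_⟩
  · rintro ⟨-, hb⟩
    exact h5 (sub_eq_zero.mp hb).symm
  · intro i
    have key : ((z₀s + es - z₀') + h * (z₁s - z₁)) - 0
        = ((z₀s + h * z₁s + es) - u) - (z₀' - (u - h * z₁)) := by ring
    rw [key, rpoly_sub_apply]
    exact dvd_sub (h1 i) (h2 i)
  · have e1 : z₀s + es - z₀' = (z₀s + es) - z₀' := by ring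
    rw [e1, twistedNorm_eq, twVec_sub]
    calc ‖twVec n γ (z₀s + es) z₁s - twVec n γ z₀' z₁‖
        ≤ ‖twVec n γ (z₀s + es) z₁s‖ + ‖twVec n γ z₀' z₁‖ := norm_sub_le _ _
      _ ≤ β + β := by
          rw [← twistedNorm_eq, ← twistedNorm_eq]; exact add_le_add h3 h4
      _ = 2 * β := by ring
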